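/- arXiv:2004.05167 — 2 statements merged into one kernel-verified Lean document; each statement's English description precedes it below -/
import Mathlib

section
/- Let V be a finite set, k ≥ 2 an integer, and w : V → ℝ with 0 ≤ w(x) < 1 for all x ∈ V. Then (k−1) · Σ_{S ⊆ V, |S| = k−1} P^V[S] = Σ_{S' ⊆ V, |S'| = k−2} P^V[S'] · Σ_{x ∈ V∖S'} (w(x)/(1 − w(x))). -/
open Finset

/-- `Pw w V S = (∏_{x∈S} w(x)) · (∏_{x∈V∖S} (1 − w(x)))`. -/
def Pw {α : Type*} [DecidableEq α] (w : α → ℝ) (V S : Finset α) : ℝ :=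
  (∏ x ∈ S, w x) * (∏ x ∈ V \ S, (1 - w x))

lemma Pw_insert {α : Type*} [Fintype α] [DecidableEq α] (w : α → ℝ)
    (hw : ∀ x, w x < 1) {S : Finset α} {x : α} (hx : x ∉ S) :
    Pw w univ (insert x S) = Pw w univ S * (w x / (1 - w x)) := by
  have h1 : (1 : ℝ) - w x ≠ 0 := by have := hw x; intro h; linarith
  have hx2 : x ∈ (univ : Finset α) \ S := by simp [hx]
  have hset : (univ : Finset α) \ insert x S = ((univ : Finset α) \ S).erase x := by
    ext y; simp [mem_erase, and_comm, not_or]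
  unfold Pw
  rw [Finset.prod_insert hx, hset, ← Finset.mul_prod_erase _ _ hx2]
  field_simp

/-- for a finite set `V`, `k ≥ 2`, and weights `0 ≤ w(x) < 1`,
`(k−1) · Σ_{S ⊆ V, |S| = k−1} P^V[S]
  = Σ_{S' ⊆ V, |S'| = k−2} P^V[S'] · Σ_{x ∈ V∖S'} w(x)/(1 − w(x))`. -/
theorem stmt11 {α : Type*} [Fintype α] [DecidableEq α] (w : α → ℝ)
    (hw : ∀ x, 0 ≤ w x ∧ w x < 1) (k : ℕ) (hk : 2 ≤ k) :
    ((k : ℝ) - 1) *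
        ∑ S ∈ (univ : Finset α).powerset.filter (fun S => S.card = k - 1), Pw w univ S
      = ∑ S' ∈ (univ : Finset α).powerset.filter (fun S' => S'.card = k - 2),
          Pw w univ S' * ∑ x ∈ (univ : Finset α) \ S', (w x / (1 - w x)) := by
  have hcast : ((k : ℝ) - 1) = ((k - 1 : ℕ) : ℝ) := by
    rw [Nat.cast_sub (by omega), Nat.cast_one]
  rw [hcast, Finset.mul_sum]
  have hL : ∀ S ∈ (univ : Finset α).powerset.filter (fun S => S.card = k - 1),
      ((k - 1 : ℕ) : ℝ) * Pw w univ S = ∑ _x ∈ S, Pw w univ S := by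
    intro S hS
    simp only [mem_filter] at hS
    rw [Finset.sum_const, hS.2, nsmul_eq_mul]
  rw [Finset.sum_congr rfl hL]
  have hR : ∀ S' ∈ (univ : Finset α).powerset.filter (fun S' => S'.card = k - 2),
      Pw w univ S' * ∑ x ∈ (univ : Finset α) \ S', (w x / (1 - w x))
        = ∑ x ∈ (univ : Finset α) \ S', Pw w univ (insert x S') := by
    intro S' _
    rw [Finset.mul_sum]
    refine Finset.sum_congr rfl fun x hx => ?_
    rw [Pw_insert w (fun y => (hw y).2) (by simpa using (mem_sdiff.mp hx).2)]
  rw [Finset.sum_congr rfl hR]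
  rw [Finset.sum_sigma', Finset.sum_sigma']
  refine Finset.sum_nbij' (i := fun p => ⟨p.1.erase p.2, p.2⟩)
    (j := fun p => ⟨insert p.2 p.1, p.2⟩) ?_ ?_ ?_ ?_ ?_
  · rintro ⟨S, x⟩ hp
    simp only [Finset.mem_sigma, mem_filter, mem_powerset] at hp ⊢
    obtain ⟨⟨-, hcard⟩, hx⟩ := hp
    refine ⟨⟨Finset.subset_univ _, ?_⟩, by simp⟩
    rw [Finset.card_erase_of_mem hx, hcard]; omega
  · rintro ⟨S', x⟩ hp
    simp only [Finset.mem_sigma, mem_filter, mem_powerset, mem_sdiff, mem_univ,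
      true_and] at hp ⊢
    obtain ⟨⟨-, hcard⟩, hx⟩ := hp
    refine ⟨⟨Finset.subset_univ _, ?_⟩, Finset.mem_insert_self _ _⟩
    rw [Finset.card_insert_of_notMem hx, hcard]; omega
  · rintro ⟨S, x⟩ hp
    simp only [Finset.mem_sigma, mem_filter] at hp
    simp [Finset.insert_erase hp.2]
  · rintro ⟨S', x⟩ hp
    simp only [Finset.mem_sigma, mem_sdiff, mem_univ, true_and] at hp
    simp [Finset.erase_insert hp.2]
  · rintro ⟨S, x⟩ hp
    simp only [Finset.mem_sigma, mem_filter] at hp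
    simp [Finset.insert_erase hp.2]
end

section
/- Let V be a finite set, k ≥ 2 an integer, and w : V → ℝ with 0 ≤ w(x) ≤ 1 for all x ∈ V and 3k/2 − 2 ≤ Σ_{x∈V} w(x) ≤ 3k/2. Then Σ_{S ⊆ V, |S| ≤ k−2} P^V[S] ≤ e^{−k/36} and Σ_{S ⊆ V, |S| ≥ 2k} P^V[S] ≤ e^{−k/54}. -/
open Finset

lemma Pw_nonneg {α : Type*} [DecidableEq α] (w : α → ℝ)
    (hw : ∀ x, 0 ≤ w x ∧ w x ≤ 1) (V S : Finset α) : 0 ≤ Pw w V S := by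
  apply mul_nonneg
  · exact Finset.prod_nonneg fun x _ => (hw x).1
  · exact Finset.prod_nonneg fun x _ => by linarith [(hw x).2]

lemma gen_fun {α : Type*} [Fintype α] [DecidableEq α] (w : α → ℝ) (t : ℝ) :
    ∑ S ∈ (univ : Finset α).powerset, t ^ S.card * Pw w univ S
      = ∏ x, (1 - w x + t * w x) := by
  rw [show (fun x => 1 - w x + t * w x) = fun x => t * w x + (1 - w x) by ext x; ring]
  rw [Finset.prod_add]
  apply Finset.sum_congr rfl
  intro S _
  rw [Pw, Finset.prod_mul_distrib, Finset.prod_const]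
  ring

/-- Chernoff-type bound: weighted tail sum is at most `t`-tilted product. -/
lemma tilt_bound {α : Type*} [Fintype α] [DecidableEq α] (w : α → ℝ)
    (hw : ∀ x, 0 ≤ w x ∧ w x ≤ 1) (t : ℝ) (ht : 0 < t)
    (p : Finset α → Prop) [DecidablePred p]
    (c : ℝ) (hc : 0 ≤ c) (hcb : ∀ S : Finset α, p S → 1 ≤ c * t ^ S.card) :
    ∑ S ∈ (univ : Finset α).powerset.filter p, Pw w univ S
      ≤ c * ∏ x, (1 - w x + t * w x) := by
  rw [← gen_fun w t, Finset.mul_sum]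
  calc ∑ S ∈ (univ : Finset α).powerset.filter p, Pw w univ S
      ≤ ∑ S ∈ (univ : Finset α).powerset.filter p, c * (t ^ S.card * Pw w univ S) := by
        apply Finset.sum_le_sum
        intro S _
        have h1 : 0 ≤ Pw w univ S := Pw_nonneg w hw univ S
        have h2 : 1 ≤ c * t ^ S.card := hcb S (by simp_all)
        nlinarith
    _ ≤ ∑ S ∈ (univ : Finset α).powerset, c * (t ^ S.card * Pw w univ S) := by
        apply Finset.sum_le_sum_of_subset_of_nonneg (Finset.filter_subset _ _)
        intro S _ _
        exact mul_nonneg hc (mul_nonneg (pow_nonneg ht.le _) (Pw_nonneg w hw univ S))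

lemma prod_le_exp {α : Type*} [Fintype α] (f : α → ℝ) (hf : ∀ x, 0 ≤ 1 + f x) :
    ∏ x, (1 + f x) ≤ Real.exp (∑ x, f x) := by
  rw [Real.exp_sum]
  exact Finset.prod_le_prod (fun x _ => hf x)
    (fun x _ => by linarith [Real.add_one_le_exp (f x)])

/-- for `k ≥ 2` and weights in `[0,1]` with
`3k/2 − 2 ≤ Σ_{x∈V} w(x) ≤ 3k/2`, the tail bounds
`Σ_{S ⊆ V, |S| ≤ k−2} P^V[S] ≤ e^{−k/36}` and
`Σ_{S ⊆ V, |S| ≥ 2k} P^V[S] ≤ e^{−k/54}` hold. -/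
theorem stmt14 {α : Type*} [Fintype α] [DecidableEq α] (w : α → ℝ)
    (hw : ∀ x, 0 ≤ w x ∧ w x ≤ 1) (k : ℕ) (hk : 2 ≤ k)
    (hsum_lo : 3 * (k : ℝ) / 2 - 2 ≤ ∑ x, w x)
    (hsum_hi : ∑ x, w x ≤ 3 * (k : ℝ) / 2) :
    (∑ S ∈ (univ : Finset α).powerset.filter (fun S => S.card ≤ k - 2), Pw w univ S
        ≤ Real.exp (-(k : ℝ) / 36)) ∧
    (∑ S ∈ (univ : Finset α).powerset.filter (fun S => 2 * k ≤ S.card), Pw w univ S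
        ≤ Real.exp (-(k : ℝ) / 54)) := by
  constructor
  · -- lower tail, t = 1/2, c = 2^(k-2)
    have hb := tilt_bound w hw (1/2) (by norm_num) (fun S => S.card ≤ k - 2)
      ((2:ℝ) ^ (k - 2)) (by positivity)
      (fun S hS => by
        rw [show ((1:ℝ)/2) ^ S.card = ((2:ℝ) ^ S.card)⁻¹ by
          rw [one_div, inv_pow]]
        rw [← div_eq_mul_inv, le_div_iff₀ (by positivity), one_mul]
        exact pow_le_pow_right₀ (by norm_num) hS)
    refine hb.trans ?_
    have hprod : ∏ x, (1 - w x + (1/2) * w x) ≤ Real.exp (-(∑ x, w x) / 2) := by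
      have := prod_le_exp (fun x => -(w x) / 2) (fun x => by linarith [(hw x).2])
      calc ∏ x, (1 - w x + (1/2) * w x) = ∏ x, (1 + (-(w x) / 2)) := by
            apply Finset.prod_congr rfl; intro x _; ring
        _ ≤ Real.exp (∑ x, -(w x) / 2) := this
        _ = Real.exp (-(∑ x, w x) / 2) := by
            congr 1
            rw [← Finset.sum_div, ← Finset.sum_neg_distrib]
    calc (2:ℝ) ^ (k - 2) * ∏ x, (1 - w x + (1/2) * w x)
        ≤ (2:ℝ) ^ (k - 2) * Real.exp (-(∑ x, w x) / 2) := by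
          apply mul_le_mul_of_nonneg_left hprod (by positivity)
      _ ≤ (2:ℝ) ^ (k - 2) * Real.exp (-(3 * (k : ℝ) / 2 - 2) / 2) := by
          apply mul_le_mul_of_nonneg_left _ (by positivity)
          apply Real.exp_le_exp.mpr
          linarith
      _ ≤ Real.exp (-(k : ℝ) / 36) := by
          have hcast : ((k - 2 : ℕ) : ℝ) = (k : ℝ) - 2 := by
            have := Nat.cast_sub hk (R := ℝ); simpa using this
          have h2 : (2:ℝ) ^ (k - 2) = Real.exp (((k - 2 : ℕ) : ℝ) * Real.log 2) := by
            rw [Real.exp_nat_mul, Real.exp_log two_pos]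
          rw [h2, ← Real.exp_add, Real.exp_le_exp, hcast]
          have hlog := Real.log_two_lt_d9
          have hk2 : (2:ℝ) ≤ (k:ℝ) := by exact_mod_cast hk
          have hm : ((k:ℝ) - 2) * Real.log 2 ≤ ((k:ℝ) - 2) * 0.6931471808 :=
            mul_le_mul_of_nonneg_left hlog.le (by linarith)
          linarith
  · -- upper tail, t = 3/2, c = (2/3)^(2k)
    have hb := tilt_bound w hw (3/2) (by norm_num) (fun S => 2 * k ≤ S.card)
      (((2:ℝ)/3) ^ (2 * k)) (by positivity)
      (fun S hS => by
        have : ((2:ℝ)/3) ^ (2*k) * (3/2) ^ S.card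
            = ((3:ℝ)/2) ^ S.card / (3/2) ^ (2*k) := by
          rw [div_pow, div_pow, div_pow]
          field_simp
        rw [this, le_div_iff₀ (by positivity), one_mul]
        exact pow_le_pow_right₀ (by norm_num) hS)
    refine hb.trans ?_
    have hprod : ∏ x, (1 - w x + (3/2) * w x) ≤ Real.exp ((∑ x, w x) / 2) := by
      have := prod_le_exp (fun x => w x / 2) (fun x => by linarith [(hw x).1])
      calc ∏ x, (1 - w x + (3/2) * w x) = ∏ x, (1 + w x / 2) := by
            apply Finset.prod_congr rfl; intro x _; ring
        _ ≤ Real.exp (∑ x, w x / 2) := this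
        _ = Real.exp ((∑ x, w x) / 2) := by rw [← Finset.sum_div]
    calc ((2:ℝ)/3) ^ (2*k) * ∏ x, (1 - w x + (3/2) * w x)
        ≤ ((2:ℝ)/3) ^ (2*k) * Real.exp ((∑ x, w x) / 2) := by
          apply mul_le_mul_of_nonneg_left hprod (by positivity)
      _ ≤ ((2:ℝ)/3) ^ (2*k) * Real.exp (3 * (k:ℝ) / 4) := by
          apply mul_le_mul_of_nonneg_left _ (by positivity)
          apply Real.exp_le_exp.mpr; linarith
      _ ≤ Real.exp (-(k : ℝ) / 54) := by
          have key : Real.exp (83/108) ≤ 9/4 := by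
            have hsmall : Real.exp (83/864) ≤ 864/781 := by
              have h1 := Real.add_one_le_exp (-(83/864) : ℝ)
              rw [Real.exp_neg] at h1
              have h2 : Real.exp (83/864) * (Real.exp (83/864))⁻¹ = 1 :=
                mul_inv_cancel₀ (Real.exp_pos _).ne'
              nlinarith [Real.exp_pos (83/864 : ℝ)]
            have h8 : Real.exp (83/108) = (Real.exp (83/864)) ^ 8 := by
              rw [← Real.exp_nat_mul]; norm_num
            calc Real.exp (83/108) = (Real.exp (83/864)) ^ 8 := h8
              _ ≤ ((864:ℝ)/781) ^ 8 := by
                  exact pow_le_pow_left₀ (Real.exp_pos _).le hsmall 8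
              _ ≤ 9/4 := by norm_num
          have heq : Real.exp (3 * (k:ℝ) / 4)
              = Real.exp (-(k : ℝ) / 54) * Real.exp ((k : ℝ) * (83/108)) := by
            rw [← Real.exp_add]; ring_nf
          calc ((2:ℝ)/3) ^ (2*k) * Real.exp (3 * (k:ℝ) / 4)
              = ((4:ℝ)/9) ^ k * (Real.exp (-(k : ℝ) / 54)
                  * (Real.exp (83/108)) ^ k) := by
                rw [heq, Real.exp_nat_mul, pow_mul]; norm_num
            _ ≤ ((4:ℝ)/9) ^ k * (Real.exp (-(k : ℝ) / 54) * ((9:ℝ)/4) ^ k) := by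
                apply mul_le_mul_of_nonneg_left _ (by positivity)
                apply mul_le_mul_of_nonneg_left _ (Real.exp_pos _).le
                exact pow_le_pow_left₀ (Real.exp_pos _).le key k
            _ = Real.exp (-(k : ℝ) / 54) := by
                rw [show ((4:ℝ)/9) ^ k * (Real.exp (-(k : ℝ) / 54) * ((9:ℝ)/4) ^ k)
                    = Real.exp (-(k : ℝ) / 54) * (((4:ℝ)/9) * ((9:ℝ)/4)) ^ k by
                  rw [mul_pow]; ring]
                norm_num
end
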